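/- Identify ℝ³ with the pure imaginary quaternions. Let N ≥ 1, let a₀,…,a_N be distinct pure imaginary quaternions, λ₀,…,λ_N > 0, μ > 0, and suppose the pure imaginary x* (distinct from all aᵢ) satisfies ζ(x*) = Σᵢ λᵢ²(x* − aᵢ)/‖x* − aᵢ‖² = 0. Define Ξ(μ)(x) = Σᵢ,ⱼ μλᵢ²λⱼ²(aⱼ − aᵢ)·(x − aⱼ)/(‖x − aᵢ + μ‖²‖x − aⱼ + μ‖²‖x − aⱼ‖²). Then the real part of Ξ(μ)(x*) is strictly positive. -/

import Mathlib

set_option maxHeartbeats 1000000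


/-- The JNR function `ζ(x) = Σᵢ λᵢ² (x − aᵢ)/‖x − aᵢ‖²`, quaternion-valued. -/
noncomputable def jnrZeta (N : ℕ) (a : Fin (N + 1) → Quaternion ℝ)
    (lam : Fin (N + 1) → ℝ) (x : Quaternion ℝ) : Quaternion ℝ :=
  ∑ i, ((lam i) ^ 2 / ‖x - a i‖ ^ 2) • (x - a i)

/-- `Ξ(μ)(x) = Σᵢⱼ μλᵢ²λⱼ² (aⱼ − aᵢ)·(x − aⱼ)/(‖x − aᵢ + μ‖²‖x − aⱼ + μ‖²‖x − aⱼ‖²)`,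
with quaternion products, `μ` the real quaternion `μ·1`. -/
noncomputable def jnrXi (N : ℕ) (a : Fin (N + 1) → Quaternion ℝ)
    (lam : Fin (N + 1) → ℝ) (μ : ℝ) (x : Quaternion ℝ) : Quaternion ℝ :=
  ∑ i, ∑ j,
    (μ * (lam i) ^ 2 * (lam j) ^ 2 /
        (‖x - a i + (μ : Quaternion ℝ)‖ ^ 2 * ‖x - a j + (μ : Quaternion ℝ)‖ ^ 2 *
          ‖x - a j‖ ^ 2)) •
      ((a j - a i) * (x - a j))

/-- Real part of a finite sum of quaternions. -/
lemma quat_re_sum {α : Type*} (s : Finset α) (f : α → Quaternion ℝ) :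
    (∑ i ∈ s, f i).re = ∑ i ∈ s, (f i).re := by
  induction s using Finset.cons_induction with
  | empty => simp [Quaternion.re_zero]
  | cons a s ha ih => simp [Finset.sum_cons, ih]

/-- Norm square of a quaternion equals `normSq`. -/
lemma quat_norm_sq (q : Quaternion ℝ) : ‖q‖ ^ 2 = Quaternion.normSq q := by
  rw [sq, ← Quaternion.normSq_eq_norm_mul_self]

/-- Real part of a product of pure imaginary quaternions is minus the inner product. -/
lemma quat_mul_re_of_im (p q : Quaternion ℝ) (hp : p.re = 0) (hq : q.re = 0) :
    (p * q).re = -(inner ℝ p q : ℝ) := by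
  have h : (inner ℝ p q : ℝ) = (p * star q).re := Quaternion.inner_def p q
  rw [Quaternion.star_eq_neg.mpr hq, mul_neg, Quaternion.re_neg] at h
  linarith

/-- Norm square of pure imaginary plus real. -/
lemma quat_norm_sq_add_coe (q : Quaternion ℝ) (hq : q.re = 0) (μ : ℝ) :
    ‖q + (μ : Quaternion ℝ)‖ ^ 2 = ‖q‖ ^ 2 + μ ^ 2 := by
  rw [quat_norm_sq, quat_norm_sq, Quaternion.normSq_def', Quaternion.normSq_def']
  simp [Quaternion.re_add, Quaternion.imI_add, Quaternion.imJ_add, Quaternion.imK_add,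
    Quaternion.re_coe, Quaternion.imI_coe, Quaternion.imJ_coe, Quaternion.imK_coe, hq]
  ring

/-- Let `N ≥ 1`, `aᵢ` distinct pure imaginary quaternions, `λᵢ > 0`,
`μ > 0`, and suppose the pure imaginary `x⁎` (distinct from all poles) satisfies
`ζ(x⁎) = 0`. Then the real part of `Ξ(μ)(x⁎)` is strictly positive. -/
theorem jnr_re_Xi_pos (N : ℕ) (hN : 1 ≤ N)
    (a : Fin (N + 1) → Quaternion ℝ) (ha_im : ∀ i, (a i).re = 0)
    (ha : Function.Injective a)
    (lam : Fin (N + 1) → ℝ) (hlam : ∀ i, 0 < lam i)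
    (μ : ℝ) (hμ : 0 < μ)
    (xs : Quaternion ℝ) (hxs_im : xs.re = 0) (hxs : ∀ i, xs ≠ a i)
    (hzero : jnrZeta N a lam xs = 0) :
    0 < (jnrXi N a lam μ xs).re := by
  classical
  have hμ2 : (0:ℝ) < μ ^ 2 := by positivity
  have him : ∀ i, (xs - a i).re = 0 := fun i => by
    simp [Quaternion.re_sub, hxs_im, ha_im i]
  have hn : ∀ i, (0:ℝ) < ‖xs - a i‖ ^ 2 := fun i => by
    have h0 : xs - a i ≠ 0 := sub_ne_zero.mpr (hxs i)
    exact pow_pos (norm_pos_iff.mpr h0) 2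
  have hd : ∀ i, (0:ℝ) < ‖xs - a i‖ ^ 2 + μ ^ 2 := fun i => by
    have := hn i; positivity
  set c : Fin (N + 1) → ℝ := fun i => lam i ^ 2 / (‖xs - a i‖ ^ 2 + μ ^ 2) with hc
  set e : Fin (N + 1) → ℝ := fun j =>
    lam j ^ 2 / ((‖xs - a j‖ ^ 2 + μ ^ 2) * ‖xs - a j‖ ^ 2) with he
  set A : Quaternion ℝ := ∑ i, c i • (xs - a i) with hA
  set B : Quaternion ℝ := ∑ j, e j • (xs - a j) with hB
  -- per-term real part
  have hterm : ∀ i j : Fin (N + 1), ((a j - a i) * (xs - a j)).re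
      = ‖xs - a j‖ ^ 2 - (inner ℝ (xs - a i) (xs - a j) : ℝ) := by
    intro i j
    have h1 : a j - a i = (xs - a i) - (xs - a j) := by abel
    rw [h1, sub_mul, Quaternion.re_sub,
      quat_mul_re_of_im _ _ (him i) (him j),
      quat_mul_re_of_im _ _ (him j) (him j),
      real_inner_self_eq_norm_sq]
    ring
  -- main identity for the real part of Ξ
  have hsum : (jnrXi N a lam μ xs).re
      = μ * ((∑ i, c i) * (∑ j, c j)) - μ * (inner ℝ A B : ℝ) := by
    simp only [jnrXi, quat_re_sum, Quaternion.re_smul, smul_eq_mul]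
    rw [hA, hB, Finset.sum_mul_sum]
    rw [sum_inner]
    simp only [inner_sum, real_inner_smul_left, real_inner_smul_right]
    rw [Finset.mul_sum, Finset.mul_sum, ← Finset.sum_sub_distrib]
    refine Finset.sum_congr rfl fun i _ => ?_
    rw [Finset.mul_sum, Finset.mul_sum, ← Finset.sum_sub_distrib]
    refine Finset.sum_congr rfl fun j _ => ?_
    rw [hterm i j, quat_norm_sq_add_coe _ (him i) μ, quat_norm_sq_add_coe _ (him j) μ]
    have h1 := hn j; have h2 := hd i; have h3 := hd j
    have h0 : ‖xs - a j‖ ≠ 0 := (norm_pos_iff.mpr (sub_ne_zero.mpr (hxs j))).ne'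
    simp only [hc, he]
    field_simp
  -- B = -(μ²)⁻¹ • A using ζ(x⁎) = 0
  have hz : ∑ j, (lam j ^ 2 / ‖xs - a j‖ ^ 2) • (xs - a j) = 0 := hzero
  have hB_eq : B = -((μ ^ 2)⁻¹ • A) := by
    have key : B + (μ ^ 2)⁻¹ • A
        = (μ ^ 2)⁻¹ • ∑ j, (lam j ^ 2 / ‖xs - a j‖ ^ 2) • (xs - a j) := by
      rw [hB, hA, Finset.smul_sum, Finset.smul_sum, ← Finset.sum_add_distrib]
      refine Finset.sum_congr rfl fun j _ => ?_
      rw [smul_smul, smul_smul, ← add_smul]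
      congr 1
      have h1 := hn j; have h2 := hd j
      have h0 : ‖xs - a j‖ ≠ 0 := (norm_pos_iff.mpr (sub_ne_zero.mpr (hxs j))).ne'
      simp only [hc, he]
      field_simp
      ring
    rw [hz, smul_zero] at key
    exact eq_neg_of_add_eq_zero_left key
  -- conclude
  have hinner : (inner ℝ A B : ℝ) = -((μ ^ 2)⁻¹ * ‖A‖ ^ 2) := by
    rw [hB_eq, inner_neg_right, real_inner_smul_right, real_inner_self_eq_norm_sq]
  have hS : (0:ℝ) < ∑ i, c i := by
    refine Finset.sum_pos (fun i _ => ?_) ⟨0, Finset.mem_univ 0⟩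
    have := hlam i; have := hd i
    exact div_pos (by positivity) (hd i)
  rw [hsum, hinner]
  have hA2 : (0:ℝ) ≤ ‖A‖ ^ 2 := pow_two_nonneg _
  have h1 : (0:ℝ) < μ * ((∑ i, c i) * (∑ j, c j)) := mul_pos hμ (mul_pos hS hS)
  have h2 : (0:ℝ) ≤ μ * ((μ ^ 2)⁻¹ * ‖A‖ ^ 2) :=
    mul_nonneg hμ.le (mul_nonneg (inv_nonneg.mpr hμ2.le) hA2)
  have h3 : μ * -((μ ^ 2)⁻¹ * ‖A‖ ^ 2) = -(μ * ((μ ^ 2)⁻¹ * ‖A‖ ^ 2)) := by ring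
  rw [h3]
  linarith
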